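/- arXiv:2307.12932 — 3 statements merged into one kernel-verified Lean document; each statement's English description precedes it below -/
import Mathlib

section
/- Let u : ℝ → ℝ be a concave function. If there exist a bounded function μ : [0,∞) → ℝ with μ ≥ 0 and μ(r) → 0 as r → ∞, and a constant C, such that u(s) ≥ -|s|·μ(|s|) + C for all s ∈ ℝ, then u is constant. -/
lemma concave_decay_aux
    (u μ : ℝ → ℝ) (C : ℝ)
    (hu : ConcaveOn ℝ Set.univ u)
    (hμ_lim : Filter.Tendsto μ Filter.atTop (nhds 0))
    (hlow : ∀ s : ℝ, u s ≥ -|s| * μ |s| + C) :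
    ∀ x y : ℝ, x < y → u x ≤ u y := by
  intro x y hxy
  by_contra h
  push_neg at h
  set m : ℝ := (u y - u x) / (y - x) with hm
  have hyx : 0 < y - x := by linarith
  have hm_neg : m < 0 := div_neg_of_neg_of_pos (by linarith) hyx
  have hε : (0 : ℝ) < -m / 2 := by linarith
  have hev : ∀ᶠ r in Filter.atTop, μ r ≤ -m / 2 :=
    hμ_lim.eventually (eventually_le_nhds hε)
  rw [Filter.eventually_atTop] at hev
  obtain ⟨R, hR⟩ := hev
  set z : ℝ := max (max (y + 1) (max R 1)) (2 * (u y - m * y - C) / (-m) + 1) with hz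
  have hz1 : y + 1 ≤ z := le_trans (le_max_left _ _) (le_max_left _ _)
  have hz2 : R ≤ z := le_trans ((le_max_left _ _).trans (le_max_right _ _)) (le_max_left _ _)
  have hzpos : (1 : ℝ) ≤ z :=
    le_trans ((le_max_right _ _).trans (le_max_right _ _)) (le_max_left _ _)
  have hz3 : 2 * (u y - m * y - C) / (-m) + 1 ≤ z := le_max_right _ _
  have hyz : y < z := by linarith
  -- slope inequality
  have hs := hu.slope_anti_adjacent (Set.mem_univ x) (Set.mem_univ z) hxy hyz
  rw [← hm] at hs
  have huz_le : u z - u y ≤ m * (z - y) := by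
    have hzy : 0 < z - y := by linarith
    calc u z - u y = (u z - u y) / (z - y) * (z - y) := by field_simp
    _ ≤ m * (z - y) := by
        apply mul_le_mul_of_nonneg_right hs (le_of_lt hzy)
  -- lower bound at z
  have hlz := hlow z
  rw [abs_of_pos (by linarith : (0:ℝ) < z)] at hlz
  have hμz : μ z ≤ -m / 2 := hR z hz2
  have hlow2 : m / 2 * z + C ≤ u z := by
    have : -z * (-m / 2) ≤ -z * μ z := by
      apply mul_le_mul_of_nonpos_left hμz (by linarith)
    nlinarith
  -- derive contradiction
  have h4 : 2 * (u y - m * y - C) / (-m) < z := by linarith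
  have h5 : 2 * (u y - m * y - C) < z * (-m) := (div_lt_iff₀ (by linarith)).mp h4
  linarith

theorem concave_one_side_decay_constant
    (u μ : ℝ → ℝ) (C : ℝ)
    (hu : ConcaveOn ℝ Set.univ u)
    (hμ_nonneg : ∀ r : ℝ, 0 ≤ r → 0 ≤ μ r)
    (hμ_bdd : ∃ B : ℝ, ∀ r : ℝ, 0 ≤ r → |μ r| ≤ B)
    (hμ_lim : Filter.Tendsto μ Filter.atTop (nhds 0))
    (hlow : ∀ s : ℝ, u s ≥ -|s| * μ |s| + C) :
    ∀ x y : ℝ, u x = u y := by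
  have hv : ConcaveOn ℝ Set.univ (fun s => u (-s)) := by
    refine ⟨convex_univ, fun a _ b _ p q hp hq hpq => ?_⟩
    have := hu.2 (Set.mem_univ (-a)) (Set.mem_univ (-b)) hp hq hpq
    simpa [smul_neg, neg_add, add_comm] using this
  have hvlow : ∀ s : ℝ, (fun s => u (-s)) s ≥ -|s| * μ |s| + C := fun s => by
    simpa [abs_neg] using hlow (-s)
  have h1 := concave_decay_aux u μ C hu hμ_lim hlow
  have h2 := concave_decay_aux (fun s => u (-s)) μ C hv hμ_lim hvlow
  have key : ∀ x y : ℝ, x < y → u x = u y := by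
    intro x y hxy
    have ha := h1 x y hxy
    have hb := h2 (-y) (-x) (by linarith)
    simp only [neg_neg] at hb
    linarith
  intro x y
  rcases lt_trichotomy x y with h | h | h
  · exact key x y h
  · rw [h]
  · exact (key y x h).symm
end

section
/- Let u(x,t) be defined by the Hopf–Lax formula u(x,t) = inf_{y ∈ ℝⁿ} { u₀(y) + t·L((x-y)/t) } for t > 0, where L : ℝⁿ → ℝ is semiconcave with constant 1/θ, i.e. L(q+z) + L(q-z) - 2L(q) ≤ (1/θ)|z|² for all q,z. Then u(·,t) is semiconcave with constant 1/(θt): for all x, z ∈ ℝⁿ and t > 0, u(x+z,t) + u(x-z,t) - 2u(x,t) ≤ |z|²/(θ t). -/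
theorem hopf_lax_semiconcavity
    (n : ℕ) (θ : ℝ) (hθ : 0 < θ)
    (u₀ L : EuclideanSpace ℝ (Fin n) → ℝ)
    (u : EuclideanSpace ℝ (Fin n) → ℝ → ℝ)
    (hL : ∀ q z : EuclideanSpace ℝ (Fin n),
      L (q + z) + L (q - z) - 2 * L q ≤ (1 / θ) * ‖z‖ ^ 2)
    (hu : ∀ x : EuclideanSpace ℝ (Fin n), ∀ t : ℝ, 0 < t →
      IsLeast (Set.range fun y : EuclideanSpace ℝ (Fin n) =>
        u₀ y + t * L (t⁻¹ • (x - y))) (u x t)) :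
    ∀ x z : EuclideanSpace ℝ (Fin n), ∀ t : ℝ, 0 < t →
      u (x + z) t + u (x - z) t - 2 * u x t ≤ ‖z‖ ^ 2 / (θ * t) := by
  intro x z t ht
  obtain ⟨⟨y, hy⟩, _⟩ := hu x t ht
  have hp := (hu (x + z) t ht).2 ⟨y, rfl⟩
  have hm := (hu (x - z) t ht).2 ⟨y, rfl⟩
  simp only at hp hm
  set q := t⁻¹ • (x - y) with hq
  have e1 : t⁻¹ • (x + z - y) = q + t⁻¹ • z := by
    rw [hq, ← smul_add]; congr 1; abel
  have e2 : t⁻¹ • (x - z - y) = q - t⁻¹ • z := by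
    rw [hq, ← smul_sub]; congr 1; abel
  have key := hL q (t⁻¹ • z)
  have hnorm : ‖t⁻¹ • z‖ ^ 2 = t⁻¹ ^ 2 * ‖z‖ ^ 2 := by
    rw [norm_smul]; simp [mul_pow, abs_of_pos (inv_pos.mpr ht)]
  rw [e1] at hp; rw [e2] at hm
  have : u (x + z) t + u (x - z) t - 2 * u x t ≤
      t * (L (q + t⁻¹ • z) + L (q - t⁻¹ • z) - 2 * L q) := by
    rw [← hy]; nlinarith
  calc u (x + z) t + u (x - z) t - 2 * u x t
      ≤ t * (L (q + t⁻¹ • z) + L (q - t⁻¹ • z) - 2 * L q) := this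
    _ ≤ t * ((1 / θ) * ‖t⁻¹ • z‖ ^ 2) := by nlinarith
    _ = ‖z‖ ^ 2 / (θ * t) := by
        rw [hnorm]; field_simp
end

section
/- If H : ℝⁿ → ℝ is twice continuously differentiable and satisfies D²H(p) ξ·ξ ≥ θ|ξ|² for all p, ξ ∈ ℝⁿ with θ > 0 (uniform convexity), then its Legendre–Fenchel conjugate L(q) = sup_p (p·q - H(p)) is semiconcave with constant 1/θ: L(q+z) + L(q-z) - 2L(q) ≤ (1/θ)|z|² for all q, z ∈ ℝⁿ. -/
section aux

variable {n : ℕ}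

private lemma line_deriv1 (H : EuclideanSpace ℝ (Fin n) → ℝ) (hH : ContDiff ℝ 2 H)
    (x v : EuclideanSpace ℝ (Fin n)) (t : ℝ) :
    HasDerivAt (fun s : ℝ => H (x + s • v)) (fderiv ℝ H (x + t • v) v) t := by
  have hc : HasDerivAt (fun s : ℝ => x + s • v) v t := by
    simpa using ((hasDerivAt_id t).smul_const v).const_add x
  have hf : HasFDerivAt H (fderiv ℝ H (x + t • v)) (x + t • v) :=
    (hH.differentiable (by norm_num) _).hasFDerivAt
  exact hf.comp_hasDerivAt t hc

private lemma line_deriv2 (H : EuclideanSpace ℝ (Fin n) → ℝ) (hH : ContDiff ℝ 2 H)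
    (x v : EuclideanSpace ℝ (Fin n)) (t : ℝ) :
    HasDerivAt (fun s : ℝ => fderiv ℝ H (x + s • v) v)
      (fderiv ℝ (fderiv ℝ H) (x + t • v) v v) t := by
  have hc : HasDerivAt (fun s : ℝ => x + s • v) v t := by
    simpa using ((hasDerivAt_id t).smul_const v).const_add x
  have hF : Differentiable ℝ (fderiv ℝ H) :=
    (hH.fderiv_right (m := 1) (by norm_num)).differentiable (by norm_num)
  have h1 : HasDerivAt (fun s : ℝ => fderiv ℝ H (x + s • v))
      (fderiv ℝ (fderiv ℝ H) (x + t • v) v) t :=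
    (hF _).hasFDerivAt.comp_hasDerivAt t hc
  simpa using h1.clm_apply (hasDerivAt_const t v)

private lemma hess_lb {θ : ℝ} (H : EuclideanSpace ℝ (Fin n) → ℝ)
    (hconv : ∀ p ξ : EuclideanSpace ℝ (Fin n),
      θ * ‖ξ‖ ^ 2 ≤ iteratedFDeriv ℝ 2 H p ![ξ, ξ])
    (p ξ : EuclideanSpace ℝ (Fin n)) :
    θ * ‖ξ‖ ^ 2 ≤ fderiv ℝ (fderiv ℝ H) p ξ ξ := by
  have := hconv p ξ
  rwa [iteratedFDeriv_two_apply] at this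

/-- Strong midpoint convexity from the Hessian bound. -/
private lemma midpoint_strong {θ : ℝ} (hθ : 0 < θ)
    (H : EuclideanSpace ℝ (Fin n) → ℝ) (hH : ContDiff ℝ 2 H)
    (hconv : ∀ p ξ : EuclideanSpace ℝ (Fin n),
      θ * ‖ξ‖ ^ 2 ≤ iteratedFDeriv ℝ 2 H p ![ξ, ξ])
    (a b : EuclideanSpace ℝ (Fin n)) :
    θ / 4 * ‖b - a‖ ^ 2 ≤ H a + H b - 2 * H ((1/2 : ℝ) • (a + b)) := by
  set m : EuclideanSpace ℝ (Fin n) := (1/2 : ℝ) • (a + b) with hm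
  set v : EuclideanSpace ℝ (Fin n) := (1/2 : ℝ) • (b - a) with hv
  set w : EuclideanSpace ℝ (Fin n) := -v with hw
  have hma : m + (1:ℝ) • w = a := by rw [hw, hv, hm]; module
  have hmb : m + (1:ℝ) • v = b := by rw [hv, hm]; module
  have hnw : ‖w‖ = ‖v‖ := norm_neg v
  -- φ t = H (m + t v) + H (m + t w) - θ ‖v‖² t²
  set φ : ℝ → ℝ := fun t => H (m + t • v) + H (m + t • w) - θ * ‖v‖ ^ 2 * t ^ 2 with hφ
  set D : ℝ → ℝ := fun t =>
    fderiv ℝ H (m + t • v) v + fderiv ℝ H (m + t • w) w - θ * ‖v‖ ^ 2 * (2 * t) with hD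
  have hφ' : ∀ t, HasDerivAt φ (D t) t := by
    intro t
    have h1 := (line_deriv1 H hH m v t).add (line_deriv1 H hH m w t)
    have h2 : HasDerivAt (fun t : ℝ => θ * ‖v‖ ^ 2 * t ^ 2) (θ * ‖v‖ ^ 2 * (2 * t)) t := by
      have h : HasDerivAt (fun t : ℝ => θ * ‖v‖ ^ 2 * t ^ 2) (θ * ‖v‖ ^ 2 * (((2:ℕ):ℝ) * t ^ (2 - 1))) t :=
        (hasDerivAt_pow 2 t).const_mul (θ * ‖v‖ ^ 2)
      convert h using 1
      push_cast
      norm_num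
    exact h1.sub h2
  have hD' : ∀ t, HasDerivAt D
      (fderiv ℝ (fderiv ℝ H) (m + t • v) v v + fderiv ℝ (fderiv ℝ H) (m + t • w) w w
        - θ * ‖v‖ ^ 2 * 2) t := by
    intro t
    have h1 := (line_deriv2 H hH m v t).add (line_deriv2 H hH m w t)
    have h2 : HasDerivAt (fun t : ℝ => θ * ‖v‖ ^ 2 * (2 * t)) (θ * ‖v‖ ^ 2 * 2) t := by
      have hb : HasDerivAt (fun t : ℝ => 2 * t) 2 t := by
        simpa using (hasDerivAt_id t).const_mul (2:ℝ)
      exact hb.const_mul (θ * ‖v‖ ^ 2)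
    exact h1.sub h2
  have hDmono : Monotone D := by
    apply monotone_of_deriv_nonneg
    · exact fun t => ((hD' t).differentiableAt)
    · intro t
      rw [(hD' t).deriv]
      have l1 := hess_lb H hconv (m + t • v) v
      have l2 := hess_lb H hconv (m + t • w) w
      rw [hnw] at l2
      linarith
  have hD0 : D 0 = 0 := by
    simp [hD, hw, map_neg]
  have hDnonneg : ∀ t, 0 ≤ t → 0 ≤ D t := fun t ht => hD0 ▸ hDmono ht
  have hφdiff : Differentiable ℝ φ := fun t => (hφ' t).differentiableAt
  have hφmono : MonotoneOn φ (Set.Ici (0:ℝ)) := by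
    apply monotoneOn_of_deriv_nonneg (convex_Ici 0) hφdiff.continuous.continuousOn
      (fun t _ => (hφdiff t).differentiableWithinAt)
    intro t ht
    rw [interior_Ici] at ht
    rw [(hφ' t).deriv]
    exact hDnonneg t (le_of_lt ht)
  have hkey : φ 0 ≤ φ 1 := hφmono (by simp) (by norm_num) (by norm_num)
  have hφ0 : φ 0 = 2 * H m := by simp [hφ]; ring
  have hφ1 : φ 1 = H b + H a - θ * ‖v‖ ^ 2 := by
    have e1 : m + (1:ℝ) • v = b := hmb
    have e2 : m + (1:ℝ) • w = a := hma
    rw [one_smul] at e1 e2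
    simp only [hφ, one_smul, e1, e2, one_pow, mul_one]
  have hnv : ‖v‖ ^ 2 = (1/4) * ‖b - a‖ ^ 2 := by
    rw [hv, norm_smul, Real.norm_eq_abs, mul_pow,
      abs_of_pos (by norm_num : (0:ℝ) < 1/2)]
    ring
  rw [hφ0, hφ1, hnv] at hkey
  linarith
end aux

theorem legendre_conjugate_semiconcave
    (n : ℕ) (θ : ℝ) (hθ : 0 < θ)
    (H : EuclideanSpace ℝ (Fin n) → ℝ)
    (hH : ContDiff ℝ 2 H)
    (hconv : ∀ p ξ : EuclideanSpace ℝ (Fin n),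
      θ * ‖ξ‖ ^ 2 ≤ iteratedFDeriv ℝ 2 H p ![ξ, ξ])
    (hbdd : ∀ q : EuclideanSpace ℝ (Fin n),
      BddAbove (Set.range fun p : EuclideanSpace ℝ (Fin n) =>
        (inner ℝ p q : ℝ) - H p))
    (L : EuclideanSpace ℝ (Fin n) → ℝ)
    (hL : L = fun q => ⨆ p : EuclideanSpace ℝ (Fin n), (inner ℝ p q : ℝ) - H p) :
    ∀ q z : EuclideanSpace ℝ (Fin n),
      L (q + z) + L (q - z) - 2 * L q ≤ (1 / θ) * ‖z‖ ^ 2 := by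
  subst hL
  intro q z
  set S : ℝ := ⨆ p : EuclideanSpace ℝ (Fin n), (inner ℝ p q : ℝ) - H p with hS
  set R : ℝ := 2 * S + (1 / θ) * ‖z‖ ^ 2 with hR
  have key : ∀ p₁ p₂ : EuclideanSpace ℝ (Fin n),
      ((inner ℝ p₁ (q + z) : ℝ) - H p₁) + ((inner ℝ p₂ (q - z) : ℝ) - H p₂) ≤ R := by
    intro p₁ p₂
    set m : EuclideanSpace ℝ (Fin n) := (1/2 : ℝ) • (p₁ + p₂) with hm
    have hLq : (inner ℝ m q : ℝ) - H m ≤ S := le_ciSup (hbdd q) m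
    have hmid := midpoint_strong hθ H hH hconv p₁ p₂
    have i1 : (inner ℝ p₁ (q + z) : ℝ) = (inner ℝ p₁ q : ℝ) + (inner ℝ p₁ z : ℝ) :=
      inner_add_right _ _ _
    have i2 : (inner ℝ p₂ (q - z) : ℝ) = (inner ℝ p₂ q : ℝ) - (inner ℝ p₂ z : ℝ) :=
      inner_sub_right _ _ _
    have i3 : (inner ℝ m q : ℝ) = (1/2) * ((inner ℝ p₁ q : ℝ) + (inner ℝ p₂ q : ℝ)) := by
      rw [hm, real_inner_smul_left, inner_add_left]
    have i4 : (inner ℝ p₁ z : ℝ) - (inner ℝ p₂ z : ℝ) = (inner ℝ (p₁ - p₂) z : ℝ) :=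
      (inner_sub_left _ _ _).symm
    have i5 : (inner ℝ (p₁ - p₂) z : ℝ) ≤ ‖p₁ - p₂‖ * ‖z‖ := real_inner_le_norm _ _
    have hn : ‖p₂ - p₁‖ = ‖p₁ - p₂‖ := norm_sub_rev _ _
    rw [hn] at hmid
    have hc : θ * (1 / θ) = 1 := by field_simp
    have ampgm : ‖p₁ - p₂‖ * ‖z‖ ≤ θ/4 * ‖p₁ - p₂‖ ^ 2 + (1/θ) * ‖z‖ ^ 2 := by
      nlinarith [sq_nonneg (θ * ‖p₁ - p₂‖ - 2 * ‖z‖), hθ, sq_nonneg ‖z‖,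
        sq_nonneg ‖p₁ - p₂‖, mul_pos hθ hθ]
    rw [hR]
    linarith
  have hne : Nonempty (EuclideanSpace ℝ (Fin n)) := ⟨0⟩
  have step1 : ∀ p₁ : EuclideanSpace ℝ (Fin n),
      ((inner ℝ p₁ (q + z) : ℝ) - H p₁)
        + (⨆ p : EuclideanSpace ℝ (Fin n), (inner ℝ p (q - z) : ℝ) - H p) ≤ R := by
    intro p₁
    have h2 : (⨆ p : EuclideanSpace ℝ (Fin n), (inner ℝ p (q - z) : ℝ) - H p)
        ≤ R - ((inner ℝ p₁ (q + z) : ℝ) - H p₁) :=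
      ciSup_le fun p₂ => by linarith [key p₁ p₂]
    linarith
  have step2 : (⨆ p : EuclideanSpace ℝ (Fin n), (inner ℝ p (q + z) : ℝ) - H p)
      ≤ R - (⨆ p : EuclideanSpace ℝ (Fin n), (inner ℝ p (q - z) : ℝ) - H p) :=
    ciSup_le fun p₁ => by linarith [step1 p₁]
  rw [hR] at step2
  linarith [step2]
end
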